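/- Let α ≠ 1 be a positive rational number, let A = (r₁/s₁,…,r_N/s_N) ∈ ℱ(α) be a factorization of α, and let t > 1 be a real number. If there exists n such that rₙ/sₙ has a non-trivial biased factorization, then there exists a factorization B ∈ ℱ(α) with f_B(t) < f_A(t); in particular, A does not attain the minimum of f over ℱ(α) at t. -/

import Mathlib

open Real Finset

/-- `𝒩` is encoded by pairs `x : ℕ × ℕ` with `x ≠ (0,0)`.
The upper set `𝒰(ξ) = {(a,b) ∈ 𝒩 : a > bξ}`. -/
def Uset (ξ : ℝ) : Set (ℕ × ℕ) := {x | x ≠ (0, 0) ∧ (x.2 : ℝ) * ξ < (x.1 : ℝ)}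

/-- The lower set `ℒ(ξ) = {(a,b) ∈ 𝒩 : a < bξ}`. -/
def Lset (ξ : ℝ) : Set (ℕ × ℕ) := {x | x ≠ (0, 0) ∧ (x.1 : ℝ) < (x.2 : ℝ) * ξ}

/-- `𝒢 = {(a,b) ∈ 𝒩 : gcd(a,b) = 1}`. -/
def Gset : Set (ℕ × ℕ) := {x | x ≠ (0, 0) ∧ Nat.Coprime x.1 x.2}

/-- `𝒰₁(ξ)`: elements `(a,b)` of `𝒰(ξ)` with `a/b ≤ m/n` (by cross multiplication)
for every `(m,n) ∈ 𝒰(ξ)` with `m ≤ a`. -/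
def U1 (ξ : ℝ) : Set (ℕ × ℕ) :=
  {x | x ∈ Uset ξ ∧ ∀ y ∈ Uset ξ, y.1 ≤ x.1 → x.1 * y.2 ≤ y.1 * x.2}

/-- `𝒰₂(ξ)`: elements `(a,b)` of `𝒰(ξ)` with `a/b ≤ m/n` for every `(m,n) ∈ 𝒰(ξ)`
with `n ≤ b`. -/
def U2 (ξ : ℝ) : Set (ℕ × ℕ) :=
  {x | x ∈ Uset ξ ∧ ∀ y ∈ Uset ξ, y.2 ≤ x.2 → x.1 * y.2 ≤ y.1 * x.2}

/-- `ℒ₁(ξ)`: elements `(a,b)` of `ℒ(ξ)` with `a/b ≥ m/n` for every `(m,n) ∈ ℒ(ξ)`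
with `m ≤ a`. -/
def L1 (ξ : ℝ) : Set (ℕ × ℕ) :=
  {x | x ∈ Lset ξ ∧ ∀ y ∈ Lset ξ, y.1 ≤ x.1 → y.1 * x.2 ≤ x.1 * y.2}

/-- `ℒ₂(ξ)`: elements `(a,b)` of `ℒ(ξ)` with `a/b ≥ m/n` for every `(m,n) ∈ ℒ(ξ)`
with `n ≤ b`. -/
def L2 (ξ : ℝ) : Set (ℕ × ℕ) :=
  {x | x ∈ Lset ξ ∧ ∀ y ∈ Lset ξ, y.2 ≤ x.2 → y.1 * x.2 ≤ x.1 * y.2}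

/-- `(a,b)` is an upper or lower best approximation for `ξ`. -/
def BestApprox (ξ : ℝ) (x : ℕ × ℕ) : Prop :=
  x ∈ Gset ∩ U1 ξ ∨ x ∈ Gset ∩ L2 ξ

/-- A factorization of a positive rational `α ≠ 1`: a tuple of fractions `r n / s n` of
positive integers, none equal to `1`, with `gcd (r m) (s n) = 1` for all `m, n`, whose
product is `α`. -/
def IsFactorization (α : ℚ) {N : ℕ} (r s : Fin N → ℕ) : Prop :=
  (∀ n, 0 < r n) ∧ (∀ n, 0 < s n) ∧ (∀ n, (r n : ℚ) / (s n : ℚ) ≠ 1) ∧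
    (∀ m n, Nat.Coprime (r m) (s n)) ∧ (∏ n, (r n : ℚ) / (s n : ℚ)) = α

/-- The measure function `f_A(t) = (Σₙ m(rₙ/sₙ)^t)^{1/t}` of a factorization, where
`m(rₙ/sₙ) = log max(rₙ, sₙ)`. -/
noncomputable def fmeas {N : ℕ} (r s : Fin N → ℕ) (t : ℝ) : ℝ :=
  (∑ n, (Real.log ((max (r n) (s n) : ℕ) : ℝ)) ^ t) ^ (1 / t)

/-- A factorization is biased if all numerators exceed the denominators or vice versa. -/
def Biased {N : ℕ} (r s : Fin N → ℕ) : Prop :=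
  (∀ n, s n < r n) ∨ (∀ n, r n < s n)

/-- `α` has no non-trivial biased factorization. -/
def NoNontrivialBiased (α : ℚ) : Prop :=
  ¬ ∃ (N : ℕ) (r s : Fin N → ℕ), 2 ≤ N ∧ IsFactorization α r s ∧ Biased r s


private lemma aux_sum_rpow_lt {M : ℕ} (hM : 2 ≤ M) (a : Fin M → ℝ) (ha : ∀ i, 0 < a i)
    {t : ℝ} (ht : 1 < t) : ∑ i, a i ^ t < (∑ i, a i) ^ t := by
  set S := ∑ i, a i with hS
  have hne : (Finset.univ : Finset (Fin M)).Nonempty := ⟨⟨0, by omega⟩, Finset.mem_univ _⟩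
  have hSpos : 0 < S := Finset.sum_pos (fun i _ => ha i) hne
  have hlt : ∀ i : Fin M, a i < S := by
    intro i
    obtain ⟨j, hj⟩ : ∃ j : Fin M, j ≠ i :=
      Fintype.exists_ne_of_one_lt_card (by simp; omega) i
    exact Finset.single_lt_sum hj (Finset.mem_univ i) (Finset.mem_univ j) (ha j)
      (fun k _ _ => (ha k).le)
  have key : ∀ i : Fin M, a i ^ t < S ^ (t - 1) * a i := by
    intro i
    have h1 : a i ^ t = a i ^ (t - 1) * a i := by
      rw [← Real.rpow_add_one (ne_of_gt (ha i)) (t - 1), sub_add_cancel]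
    rw [h1]
    exact mul_lt_mul_of_pos_right
      (Real.rpow_lt_rpow (ha i).le (hlt i) (by linarith)) (ha i)
  calc ∑ i, a i ^ t < ∑ i, S ^ (t - 1) * a i :=
        Finset.sum_lt_sum_of_nonempty hne (fun i _ => key i)
    _ = S ^ (t - 1) * S := by rw [← Finset.mul_sum]
    _ = S ^ t := by rw [← Real.rpow_add_one (ne_of_gt hSpos) (t - 1), sub_add_cancel]

/-- Lemma `Biased`: if some component `rₙ/sₙ` of a factorization `A` of
`α` has a non-trivial biased factorization and `t > 1`, then some factorization of `α`
has strictly smaller measure function at `t` than `A`. -/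
theorem stmt_15 (α : ℚ) (hα : 0 < α) (hα1 : α ≠ 1)
    (N : ℕ) (r s : Fin N → ℕ) (hA : IsFactorization α r s)
    (t : ℝ) (ht : 1 < t) (n : Fin N)
    (hbias : ∃ (M : ℕ) (u v : Fin M → ℕ), 2 ≤ M ∧
      IsFactorization ((r n : ℚ) / (s n : ℚ)) u v ∧ Biased u v) :
    ∃ (M : ℕ) (u v : Fin M → ℕ), IsFactorization α u v ∧
      fmeas u v t < fmeas r s t := by
  obtain ⟨M, u, v, hM, hF, hb⟩ := hbias
  obtain ⟨hrpos, hspos, hne1, hcop, hprod⟩ := hA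
  obtain ⟨hupos, hvpos, hune1, hucop, huprod⟩ := hF
  obtain ⟨N', rfl⟩ : ∃ N'', N = N'' + 1 := ⟨N - 1, by have := n.2; omega⟩
  -- products of u and v
  have hPu : 0 < ∏ i, u i := Finset.prod_pos fun i _ => hupos i
  have hPv : 0 < ∏ i, v i := Finset.prod_pos fun i _ => hvpos i
  have hcross : (∏ i, u i) * s n = r n * ∏ i, v i := by
    have h1 : ((∏ i, u i : ℕ) : ℚ) / ((∏ i, v i : ℕ) : ℚ) = (r n : ℚ) / s n := by
      push_cast
      rw [← Finset.prod_div_distrib]; exact huprod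
    have h2 := (div_eq_div_iff (by exact_mod_cast hPv.ne')
      (by exact_mod_cast (hspos n).ne')).mp h1
    exact_mod_cast h2
  have hPu_eq : ∏ i, u i = r n := by
    have hcopP : Nat.Coprime (∏ i, u i) (∏ i, v i) :=
      Nat.Coprime.prod_left fun i _ => Nat.Coprime.prod_right fun j _ => hucop i j
    have h1 : (∏ i, u i) ∣ r n :=
      Nat.Coprime.dvd_of_dvd_mul_right hcopP ⟨s n, hcross.symm⟩
    have h2 : r n ∣ ∏ i, u i :=
      Nat.Coprime.dvd_of_dvd_mul_right (hcop n n) ⟨∏ i, v i, hcross⟩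
    exact Nat.dvd_antisymm h1 h2
  have hPv_eq : ∏ i, v i = s n := by
    rw [hPu_eq] at hcross
    exact (Nat.eq_of_mul_eq_mul_left (hrpos n) hcross).symm
  -- splitting indices
  have hsplit : ∀ i : Fin (N' + M),
      (∃ i', i = Fin.castAdd M i') ∨ (∃ i', i = Fin.natAdd N' i') :=
    fun i => Fin.addCases (fun i' => Or.inl ⟨i', rfl⟩) (fun i' => Or.inr ⟨i', rfl⟩) i
  refine ⟨N' + M, Fin.append (fun i => r (n.succAbove i)) u,
    Fin.append (fun i => s (n.succAbove i)) v, ⟨?_, ?_, ?_, ?_, ?_⟩, ?_⟩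
  · intro i
    rcases hsplit i with ⟨i', rfl⟩ | ⟨i', rfl⟩
    · rw [Fin.append_left]; exact hrpos _
    · rw [Fin.append_right]; exact hupos _
  · intro i
    rcases hsplit i with ⟨i', rfl⟩ | ⟨i', rfl⟩
    · rw [Fin.append_left]; exact hspos _
    · rw [Fin.append_right]; exact hvpos _
  · intro i
    rcases hsplit i with ⟨i', rfl⟩ | ⟨i', rfl⟩
    · rw [Fin.append_left, Fin.append_left]; exact hne1 _
    · rw [Fin.append_right, Fin.append_right]; exact hune1 _
  · intro i j
    rcases hsplit i with ⟨i', rfl⟩ | ⟨i', rfl⟩ <;>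
      rcases hsplit j with ⟨j', rfl⟩ | ⟨j', rfl⟩
    · rw [Fin.append_left, Fin.append_left]; exact hcop _ _
    · rw [Fin.append_left, Fin.append_right]
      exact Nat.Coprime.coprime_dvd_right
        (hPv_eq ▸ Finset.dvd_prod_of_mem v (Finset.mem_univ j')) (hcop _ n)
    · rw [Fin.append_right, Fin.append_left]
      exact Nat.Coprime.coprime_dvd_left
        (hPu_eq ▸ Finset.dvd_prod_of_mem u (Finset.mem_univ i')) (hcop n _)
    · rw [Fin.append_right, Fin.append_right]; exact hucop _ _
  · rw [Fin.prod_univ_add]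
    simp only [Fin.append_left, Fin.append_right]
    rw [huprod, ← hprod, Fin.prod_univ_succAbove (fun i => (r i : ℚ) / (s i : ℚ)) n,
      mul_comm]
  · -- the measure inequality
    unfold fmeas
    have hmax1 : ∀ m : Fin (N' + 1), 1 ≤ max (r m) (s m) :=
      fun m => le_trans (hrpos m) (le_max_left _ _)
    have huvne : ∀ j : Fin M, u j ≠ v j := by
      intro j h
      apply hune1 j
      rw [h, div_self (by exact_mod_cast (hvpos j).ne')]
    have hmax2 : ∀ j : Fin M, 2 ≤ max (u j) (v j) := by
      intro j
      have h1 := hupos j; have h2 := hvpos j; have h3 := huvne j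
      rcases le_or_gt (u j) (v j) with h | h <;> omega
    have hmaxprod : ∏ j, max (u j) (v j) = max (r n) (s n) := by
      rcases hb with hb | hb
      · have h1 : ∀ j : Fin M, max (u j) (v j) = u j := fun j => max_eq_left (hb j).le
        have h2 : s n < r n := by
          rw [← hPu_eq, ← hPv_eq]
          exact Finset.prod_lt_prod_of_nonempty (fun j _ => hvpos j) (fun j _ => hb j)
            ⟨⟨0, by omega⟩, Finset.mem_univ _⟩
        simp only [h1]
        rw [hPu_eq, max_eq_left h2.le]
      · have h1 : ∀ j : Fin M, max (u j) (v j) = v j := fun j => max_eq_right (hb j).le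
        have h2 : r n < s n := by
          rw [← hPu_eq, ← hPv_eq]
          exact Finset.prod_lt_prod_of_nonempty (fun j _ => hupos j) (fun j _ => hb j)
            ⟨⟨0, by omega⟩, Finset.mem_univ _⟩
        simp only [h1]
        rw [hPv_eq, max_eq_right h2.le]
    have hlogsum : Real.log ((max (r n) (s n) : ℕ) : ℝ) =
        ∑ j, Real.log ((max (u j) (v j) : ℕ) : ℝ) := by
      rw [← hmaxprod]
      push_cast
      refine Real.log_prod fun j _ => ?_
      have h : (0:ℝ) < (u j : ℝ) := by exact_mod_cast hupos j
      exact ne_of_gt (lt_of_lt_of_le h (le_max_left _ _))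
    have hkey : ∑ j, (Real.log ((max (u j) (v j) : ℕ) : ℝ)) ^ t <
        (Real.log ((max (r n) (s n) : ℕ) : ℝ)) ^ t := by
      rw [hlogsum]
      exact aux_sum_rpow_lt hM _ (fun j => Real.log_pos (by
        have := hmax2 j; exact_mod_cast this)) ht
    have hsums : ∑ i : Fin (N' + M),
        (Real.log ((max (Fin.append (fun i => r (n.succAbove i)) u i)
          (Fin.append (fun i => s (n.succAbove i)) v i) : ℕ) : ℝ)) ^ t <
        ∑ m : Fin (N' + 1), (Real.log ((max (r m) (s m) : ℕ) : ℝ)) ^ t := by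
      rw [Fin.sum_univ_add]
      simp only [Fin.append_left, Fin.append_right]
      rw [Fin.sum_univ_succAbove
        (fun m => (Real.log ((max (r m) (s m) : ℕ) : ℝ)) ^ t) n]
      rw [add_comm]
      exact add_lt_add_left hkey _
    refine Real.rpow_lt_rpow ?_ hsums (by positivity)
    refine Finset.sum_nonneg fun i _ => Real.rpow_nonneg ?_ t
    refine Real.log_nonneg ?_
    rcases hsplit i with ⟨i', rfl⟩ | ⟨i', rfl⟩
    · rw [Fin.append_left, Fin.append_left]
      exact_mod_cast hmax1 _
    · rw [Fin.append_right, Fin.append_right]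
      have := hmax2 i'
      exact_mod_cast by omega
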